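/- arXiv:1512.03228 — 2 statements merged into one kernel-verified Lean document; each statement's English description precedes it below -/
import Mathlib

section
/- For each fixed t ∈ (−1,1) and each j = 0,1,2,…, the function x ↦ T₁^j[k₁^{II}(1,·) − k₁^{II}(t,·)](x) is well-defined on (−1,1) (all the series occurring in the iterates converge absolutely), is odd, and is strictly increasing on (−1,1). In particular, (T₁^j k₁^{II}(t,·))(x) < (T₁^j k₁^{II}(1,·))(x) for every x ∈ (0,1). -/
open Set

/-- The subtransfer operator `T_β f(x) = ∑_{j∈ℤ, j≠0} (β/(x+2j)²) f(-β/(x+2j))`. -/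
noncomputable def Tsub (β : ℝ) (f : ℝ → ℝ) (x : ℝ) : ℝ :=
  ∑' j : {j : ℤ // j ≠ 0},
    (β / (x + 2 * ((j : ℤ) : ℝ)) ^ 2) * f (-β / (x + 2 * ((j : ℤ) : ℝ)))

/-- The odd part of the dynamically reduced Hilbert kernel:
`k₁^{II}(t,x) = t²x/(1-t²x²) + ∑_{j≥1} [2x/(4j²-x²) - x/((2j-t)²-x²) - x/((2j+t)²-x²)]`. -/
noncomputable def kII (t x : ℝ) : ℝ :=
  t ^ 2 * x / (1 - t ^ 2 * x ^ 2) +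
    ∑' j : ℕ, (2 * x / (4 * ((j : ℝ) + 1) ^ 2 - x ^ 2)
      - x / ((2 * ((j : ℝ) + 1) - t) ^ 2 - x ^ 2)
      - x / ((2 * ((j : ℝ) + 1) + t) ^ 2 - x ^ 2))

namespace KIIAux

open Real MeasureTheory Filter

/-! ### Elementary series terms -/

/-- Generic series term `x/((2(j+1)+c)² - x²)`. -/
noncomputable def F (c x : ℝ) (j : ℕ) : ℝ := x / ((2 * ((j : ℝ) + 1) + c) ^ 2 - x ^ 2)

lemma pole_ge {c : ℝ} (hc : -1 ≤ c) (j : ℕ) : (1 : ℝ) ≤ 2 * ((j : ℝ) + 1) + c := by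
  have : (0:ℝ) ≤ (j : ℝ) := Nat.cast_nonneg j
  linarith

lemma abs_le_one {x : ℝ} (hx : x ^ 2 < 1) : |x| ≤ 1 := by
  nlinarith [sq_abs x, abs_nonneg x]

lemma denom_pos {x : ℝ} (hx : x ^ 2 < 1) {c : ℝ} (hc : -1 ≤ c) (j : ℕ) :
    0 < (2 * ((j : ℝ) + 1) + c) ^ 2 - x ^ 2 := by
  have h1 := pole_ge hc j
  nlinarith

lemma summable_sq_inv : Summable (fun n : ℕ => 1 / ((n : ℝ) + 1) ^ 2) := by
  have h : Summable (fun n : ℕ => 1 / (n : ℝ) ^ 2) :=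
    Real.summable_one_div_nat_pow.mpr one_lt_two
  exact ((summable_nat_add_iff 1).mpr h).congr fun n => by push_cast; ring

lemma summable_F {x : ℝ} (hx : x ^ 2 < 1) {c : ℝ} (hc : -1 ≤ c) : Summable (F c x) := by
  refine (summable_nat_add_iff 1).mp ?_
  refine Summable.of_norm_bounded summable_sq_inv (fun n => ?_)
  have hn : (0:ℝ) ≤ (n:ℝ) := n.cast_nonneg
  have hx1 : |x| ≤ 1 := abs_le_one hx
  simp only [F, Real.norm_eq_abs, abs_div]
  push_cast
  have hsq : (2*(n:ℝ)+3)^2 ≤ (2*((n:ℝ)+1+1)+c)^2 := by nlinarith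
  have hd : ((n:ℝ)+1)^2 ≤ (2*((n:ℝ)+1+1)+c)^2 - x^2 := by nlinarith
  have hd0 : (0:ℝ) < ((n:ℝ)+1)^2 := by positivity
  rw [abs_of_pos (lt_of_lt_of_le hd0 hd)]
  exact div_le_div₀ zero_le_one hx1 hd0 hd

lemma kII_eq {t x : ℝ} (hx : x ^ 2 < 1) (ht : -1 ≤ t) (ht' : t ≤ 1) :
    kII t x = t ^ 2 * x / (1 - t ^ 2 * x ^ 2) +
      (2 * ∑' j, F 0 x j - ∑' j, F (-t) x j - ∑' j, F t x j) := by
  have h0 : Summable (F 0 x) := summable_F hx (by norm_num)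
  have hm : Summable (F (-t) x) := summable_F hx (by linarith)
  have hp : Summable (F t x) := summable_F hx ht
  rw [kII]
  congr 1
  calc ∑' (j : ℕ), (2 * x / (4 * ((j : ℝ) + 1) ^ 2 - x ^ 2)
      - x / ((2 * ((j : ℝ) + 1) - t) ^ 2 - x ^ 2)
      - x / ((2 * ((j : ℝ) + 1) + t) ^ 2 - x ^ 2))
      = ∑' j, (2 * F 0 x j - F (-t) x j - F t x j) :=
        tsum_congr fun j => by simp only [F]; ring
    _ = 2 * ∑' j, F 0 x j - ∑' j, F (-t) x j - ∑' j, F t x j := by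
        rw [Summable.tsum_sub ((h0.mul_left 2).sub hm) hp,
          Summable.tsum_sub (h0.mul_left 2) hm, tsum_mul_left]

lemma shift_Fneg1 {x : ℝ} (hx : x ^ 2 < 1) :
    ∑' j, F (-1) x j = x / (1 - x ^ 2) + ∑' j, F 1 x j := by
  rw [Summable.tsum_eq_zero_add (summable_F hx (le_refl (-1)))]
  congr 1
  · simp only [F]; norm_num
  · exact tsum_congr fun j => by simp only [F]; push_cast; ring

lemma kII_one_eq {x : ℝ} (hx : x ^ 2 < 1) :
    kII 1 x = 2 * ∑' j, F 0 x j - 2 * ∑' j, F 1 x j := by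
  rw [kII_eq hx (by norm_num) le_rfl, shift_Fneg1 hx]
  ring

/-- the combined difference term -/
noncomputable def GG (t x : ℝ) (j : ℕ) : ℝ := F (-t) x j + F t x j - 2 * F 1 x j

lemma summable_GG {t x : ℝ} (hx : x ^ 2 < 1) (ht : -1 ≤ t) (ht' : t ≤ 1) :
    Summable (GG t x) := by
  have hm : Summable (F (-t) x) := summable_F hx (by linarith)
  have hp : Summable (F t x) := summable_F hx ht
  have h1 : Summable (F 1 x) := summable_F hx (by norm_num)
  exact ((hm.add hp).sub (h1.mul_left 2)).congr fun j => by simp [GG]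

lemma diff_eq {t x : ℝ} (hx : x ^ 2 < 1) (ht : -1 ≤ t) (ht' : t ≤ 1) :
    kII 1 x - kII t x = -(t ^ 2 * x / (1 - t ^ 2 * x ^ 2)) + ∑' j, GG t x j := by
  have hm : Summable (F (-t) x) := summable_F hx (by linarith)
  have hp : Summable (F t x) := summable_F hx ht
  have h1 : Summable (F 1 x) := summable_F hx (by norm_num)
  have hGG : ∑' j, GG t x j
      = ∑' j, F (-t) x j + ∑' j, F t x j - 2 * ∑' j, F 1 x j := by
    calc ∑' j, GG t x j = ∑' j, (F (-t) x j + F t x j - 2 * F 1 x j) :=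
          tsum_congr fun j => by simp [GG]
      _ = _ := by
          rw [Summable.tsum_sub (hm.add hp) (h1.mul_left 2),
            Summable.tsum_add hm hp, tsum_mul_left]
  rw [kII_one_eq hx, kII_eq hx ht ht', hGG]
  ring

/-! ### Uniform bounds -/

noncomputable def bnd (c : ℝ) (j : ℕ) : ℝ := 1 / ((2 * ((j : ℝ) + 1) + c) ^ 2 - 1)

lemma summable_bnd {c : ℝ} (hc : -1 < c) : Summable (bnd c) := by
  refine (summable_nat_add_iff 1).mp ?_
  refine Summable.of_norm_bounded summable_sq_inv (fun n => ?_)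
  have hn : (0:ℝ) ≤ (n:ℝ) := n.cast_nonneg
  simp only [bnd, Real.norm_eq_abs, abs_div, abs_one]
  push_cast
  have hsq : (2*(n:ℝ)+3)^2 ≤ (2*((n:ℝ)+1+1)+c)^2 := by nlinarith
  have hd : ((n:ℝ)+1)^2 ≤ (2*((n:ℝ)+1+1)+c)^2 - 1 := by nlinarith
  have hd0 : (0:ℝ) < ((n:ℝ)+1)^2 := by positivity
  rw [abs_of_pos (lt_of_lt_of_le hd0 hd)]
  exact div_le_div₀ zero_le_one le_rfl hd0 hd

lemma abs_F_le {x : ℝ} (hx : x ^ 2 < 1) {c : ℝ} (hc : -1 < c) (j : ℕ) :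
    |F c x j| ≤ bnd c j := by
  have hj : (0:ℝ) ≤ (j:ℝ) := j.cast_nonneg
  have hpole : 1 < 2*((j:ℝ)+1)+c := by linarith
  have hd1 : (0:ℝ) < (2*((j:ℝ)+1)+c)^2 - 1 := by nlinarith
  have hD : (2*((j:ℝ)+1)+c)^2 - 1 ≤ (2*((j:ℝ)+1)+c)^2 - x^2 := by nlinarith
  have hDpos := denom_pos hx (le_of_lt hc) j
  rw [F, bnd, abs_div, abs_of_pos hDpos]
  exact div_le_div₀ zero_le_one (abs_le_one hx) hd1 hD

lemma abs_tsum_F_le {x : ℝ} (hx : x ^ 2 < 1) {c : ℝ} (hc : -1 < c) :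
    |∑' j, F c x j| ≤ ∑' j, bnd c j := by
  have hs := (summable_F hx (le_of_lt hc)).abs
  have h1 : |∑' j, F c x j| ≤ ∑' j, |F c x j| := by
    simpa [Real.norm_eq_abs] using
      norm_tsum_le_tsum_norm (f := F c x) (by simpa [Real.norm_eq_abs] using hs)
  exact h1.trans (Summable.tsum_le_tsum (fun j => abs_F_le hx hc j) hs (summable_bnd hc))

/-- `Bdd f` : `f` is bounded on `(-1,1)`. -/
def Bdd (f : ℝ → ℝ) : Prop := ∃ M : ℝ, ∀ x ∈ Ioo (-1 : ℝ) 1, |f x| ≤ M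

lemma sq_lt_one {x : ℝ} (hx : x ∈ Ioo (-1 : ℝ) 1) : x ^ 2 < 1 := by
  obtain ⟨h1, h2⟩ := hx; nlinarith

lemma kII_bounded {t : ℝ} (ht : -1 < t) (ht' : t < 1) : Bdd (kII t) := by
  refine ⟨1/(1-t^2) + (2 * ∑' j, bnd 0 j + ∑' j, bnd (-t) j + ∑' j, bnd t j),
    fun x hx => ?_⟩
  have hx2 := sq_lt_one hx
  rw [kII_eq hx2 (le_of_lt ht) (le_of_lt ht')]
  have ht2 : t^2 < 1 := by nlinarith
  have hK : |t^2*x/(1-t^2*x^2)| ≤ 1/(1-t^2) := by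
    have h3 : (0:ℝ) < 1 - t^2 := by linarith
    have h4 : |t^2*x| ≤ 1 := by
      rw [abs_mul, abs_of_nonneg (sq_nonneg t)]
      nlinarith [abs_le_one hx2, abs_nonneg x, sq_nonneg t]
    have h5 : 1 - t^2 ≤ |1 - t^2*x^2| := by
      rw [abs_of_pos (by nlinarith [sq_nonneg x, sq_nonneg t] : (0:ℝ) < 1 - t^2*x^2)]
      nlinarith [sq_nonneg x, sq_nonneg t]
    rw [abs_div]
    exact div_le_div₀ (by positivity) h4 h3 h5
  have hA := abs_tsum_F_le hx2 (show (-1:ℝ) < 0 by norm_num)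
  have hB := abs_tsum_F_le hx2 (show (-1:ℝ) < -t by linarith)
  have hC := abs_tsum_F_le hx2 (show (-1:ℝ) < t by linarith)
  have habs2 : |2 * ∑' j, F 0 x j| = 2 * |∑' j, F 0 x j| := by
    rw [abs_mul]; norm_num
  calc |t^2*x/(1-t^2*x^2) + (2 * ∑' j, F 0 x j - ∑' j, F (-t) x j - ∑' j, F t x j)|
      ≤ |t^2*x/(1-t^2*x^2)| + |2 * ∑' j, F 0 x j - ∑' j, F (-t) x j - ∑' j, F t x j| :=
        abs_add_le _ _
    _ ≤ |t^2*x/(1-t^2*x^2)| + (|2 * ∑' j, F 0 x j - ∑' j, F (-t) x j| + |∑' j, F t x j|) := by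
        linarith [abs_sub (2 * ∑' j, F 0 x j - ∑' j, F (-t) x j) (∑' j, F t x j)]
    _ ≤ |t^2*x/(1-t^2*x^2)| + (|2 * ∑' j, F 0 x j| + |∑' j, F (-t) x j| + |∑' j, F t x j|) := by
        linarith [abs_sub (2 * ∑' j, F 0 x j) (∑' j, F (-t) x j)]
    _ ≤ _ := by rw [habs2]; linarith

lemma kII_one_bounded : Bdd (kII 1) := by
  refine ⟨2 * ∑' j, bnd 0 j + 2 * ∑' j, bnd 1 j, fun x hx => ?_⟩
  have hx2 := sq_lt_one hx
  rw [kII_one_eq hx2]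
  have hA := abs_tsum_F_le hx2 (show (-1:ℝ) < 0 by norm_num)
  have hB := abs_tsum_F_le hx2 (show (-1:ℝ) < 1 by norm_num)
  have h1 : |2 * ∑' j, F 0 x j| = 2 * |∑' j, F 0 x j| := by rw [abs_mul]; norm_num
  have h2 : |2 * ∑' j, F 1 x j| = 2 * |∑' j, F 1 x j| := by rw [abs_mul]; norm_num
  calc |2 * ∑' j, F 0 x j - 2 * ∑' j, F 1 x j|
      ≤ |2 * ∑' j, F 0 x j| + |2 * ∑' j, F 1 x j| := abs_sub _ _
    _ ≤ _ := by rw [h1, h2]; linarith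

/-! ### Laplace transform representation -/

lemma integral_exp_neg_mul {c : ℝ} (hc : 0 < c) :
    ∫ u in Ioi (0:ℝ), Real.exp (-c * u) = 1 / c := by
  have hderiv : ∀ u ∈ Ici (0:ℝ),
      HasDerivAt (fun v => -(Real.exp (-c * v) / c)) (Real.exp (-c * u)) u := by
    intro u _
    have h1 : HasDerivAt (fun v : ℝ => -c * v) (-c) u := by
      simpa using (hasDerivAt_id u).const_mul (-c)
    have h2 := (h1.exp.div_const c).neg
    refine h2.congr_deriv ?_
    field_simp
  have hint : IntegrableOn (fun u => Real.exp (-c*u)) (Ioi (0:ℝ)) :=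
    exp_neg_integrableOn_Ioi 0 hc
  have htend : Tendsto (fun u : ℝ => -(Real.exp (-c * u) / c)) atTop (nhds 0) := by
    have h1 : Tendsto (fun u : ℝ => c * u) atTop atTop :=
      Tendsto.const_mul_atTop hc tendsto_id
    have h2 : Tendsto (fun u : ℝ => -(c * u)) atTop atBot := tendsto_neg_atTop_atBot.comp h1
    have h4 := ((Real.tendsto_exp_atBot.comp h2).div_const c).neg
    simpa [neg_mul, Function.comp] using h4
  have := integral_Ioi_of_hasDerivAt_of_tendsto' hderiv hint htend
  rw [this]
  simp [Real.exp_zero]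

lemma integrable_sinh_exp {x a : ℝ} (hx : 0 ≤ x) (hxa : x < a) :
    IntegrableOn (fun u => Real.sinh (x * u) * Real.exp (-a * u)) (Ioi (0:ℝ)) := by
  have h : ∀ u : ℝ, (Real.exp (-(a-x) * u) - Real.exp (-(a+x) * u))/2
      = Real.sinh (x*u) * Real.exp (-a*u) := by
    intro u
    rw [Real.sinh_eq, show (-(a-x))*u = x*u + -a*u by ring, Real.exp_add,
      show (-(a+x))*u = -(x*u) + -a*u by ring, Real.exp_add]
    ring
  have h1 : IntegrableOn
      (fun u => (Real.exp (-(a-x)*u) - Real.exp (-(a+x)*u))/2) (Ioi (0:ℝ)) :=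
    ((exp_neg_integrableOn_Ioi 0 (by linarith)).sub
      (exp_neg_integrableOn_Ioi 0 (by linarith))).div_const 2
  exact h1.congr_fun (fun u _ => h u) measurableSet_Ioi

lemma laplace_sinh {x a : ℝ} (hx : 0 ≤ x) (hxa : x < a) :
    ∫ u in Ioi (0:ℝ), Real.sinh (x * u) * Real.exp (-a * u) = x / (a ^ 2 - x ^ 2) := by
  have h : ∀ u ∈ Ioi (0:ℝ), Real.sinh (x*u) * Real.exp (-a*u)
      = (Real.exp (-(a-x) * u) - Real.exp (-(a+x) * u))/2 := by
    intro u _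
    rw [Real.sinh_eq, show (-(a-x))*u = x*u + -a*u by ring, Real.exp_add,
      show (-(a+x))*u = -(x*u) + -a*u by ring, Real.exp_add]
    ring
  rw [setIntegral_congr_fun measurableSet_Ioi h, integral_div,
    integral_sub (exp_neg_integrableOn_Ioi 0 (by linarith : (0:ℝ) < a - x))
      (exp_neg_integrableOn_Ioi 0 (by linarith : (0:ℝ) < a + x)),
    integral_exp_neg_mul (by linarith : (0:ℝ) < a - x),
    integral_exp_neg_mul (by linarith : (0:ℝ) < a + x)]
  have h1 : a - x ≠ 0 := by linarith
  have h2 : a + x ≠ 0 := by linarith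
  have h3 : a^2 - x^2 ≠ 0 := by
    have : a^2 - x^2 = (a-x)*(a+x) := by ring
    rw [this]; exact mul_ne_zero h1 h2
  field_simp
  ring

lemma exp_neg_two_lt {u : ℝ} (hu : 0 < u) : Real.exp (-2*u) < 1 := by
  rw [← Real.exp_zero]
  exact Real.exp_lt_exp.mpr (by linarith)

noncomputable def AA (t u : ℝ) : ℝ :=
  (exp (-(2 - t) * u) + exp (-(2 + t) * u) - 2 * exp (-3 * u)) / (1 - exp (-2 * u))

noncomputable def EE (t u : ℝ) : ℝ := if t = 0 then 0 else exp (-(1 / t) * u)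

noncomputable def BB (t u : ℝ) : ℝ := AA t u - EE t u

noncomputable def aaf (t : ℝ) (j : ℕ) (u : ℝ) : ℝ :=
  exp (-(2 * ((j : ℝ) + 1) - t) * u) + exp (-(2 * ((j : ℝ) + 1) + t) * u)
    - 2 * exp (-(2 * ((j : ℝ) + 1) + 1) * u)

lemma aaf_nonneg {t : ℝ} (ht0 : -1 ≤ t) (ht1 : t ≤ 1) (j : ℕ) {u : ℝ} (hu : 0 ≤ u) :
    0 ≤ aaf t j u := by
  unfold aaf
  have hj : (0:ℝ) ≤ (j:ℝ) := j.cast_nonneg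
  have h1 : Real.exp (-(2*((j:ℝ)+1)+1)*u) ≤ Real.exp (-(2*((j:ℝ)+1)-t)*u) :=
    Real.exp_le_exp.mpr (by nlinarith [mul_nonneg (by linarith : (0:ℝ) ≤ 1+t) hu])
  have h2 : Real.exp (-(2*((j:ℝ)+1)+1)*u) ≤ Real.exp (-(2*((j:ℝ)+1)+t)*u) :=
    Real.exp_le_exp.mpr (by nlinarith [mul_nonneg (by linarith : (0:ℝ) ≤ 1-t) hu])
  linarith

lemma integral_aaf {t x : ℝ} (ht0 : 0 ≤ t) (ht1 : t < 1) (hx : 0 ≤ x) (hx1 : x < 1) (j : ℕ) :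
    ∫ u in Ioi (0:ℝ), Real.sinh (x * u) * aaf t j u = GG t x j := by
  have hj : (0:ℝ) ≤ (j:ℝ) := j.cast_nonneg
  have ha1 : x < 2*((j:ℝ)+1) - t := by linarith
  have ha2 : x < 2*((j:ℝ)+1) + t := by linarith
  have ha3 : x < 2*((j:ℝ)+1) + 1 := by linarith
  have i1 := integrable_sinh_exp hx ha1
  have i2 := integrable_sinh_exp hx ha2
  have i3 := integrable_sinh_exp hx ha3
  have e : ∀ u : ℝ, Real.sinh (x*u) * aaf t j u
      = Real.sinh (x*u)*Real.exp (-(2*((j:ℝ)+1)-t)*u)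
        + Real.sinh (x*u)*Real.exp (-(2*((j:ℝ)+1)+t)*u)
        - 2*(Real.sinh (x*u)*Real.exp (-(2*((j:ℝ)+1)+1)*u)) := by
    intro u; unfold aaf; ring
  have i12 : IntegrableOn (fun u => Real.sinh (x*u)*Real.exp (-(2*((j:ℝ)+1)-t)*u)
      + Real.sinh (x*u)*Real.exp (-(2*((j:ℝ)+1)+t)*u)) (Ioi (0:ℝ)) := i1.add i2
  have i3' : IntegrableOn (fun u => 2*(Real.sinh (x*u)*Real.exp (-(2*((j:ℝ)+1)+1)*u)))
      (Ioi (0:ℝ)) := i3.const_mul 2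
  rw [setIntegral_congr_fun measurableSet_Ioi (fun u _ => e u),
    integral_sub i12 i3', integral_add i1 i2,
    integral_const_mul,
    laplace_sinh hx ha1, laplace_sinh hx ha2, laplace_sinh hx ha3]
  unfold GG F
  ring

lemma integrable_sinh_aaf {t x : ℝ} (ht0 : 0 ≤ t) (ht1 : t < 1) (hx : 0 ≤ x) (hx1 : x < 1)
    (j : ℕ) : IntegrableOn (fun u => Real.sinh (x * u) * aaf t j u) (Ioi (0:ℝ)) := by
  have hj : (0:ℝ) ≤ (j:ℝ) := j.cast_nonneg
  have i1 := integrable_sinh_exp hx (by linarith : x < 2*((j:ℝ)+1) - t)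
  have i2 := integrable_sinh_exp hx (by linarith : x < 2*((j:ℝ)+1) + t)
  have i3 := integrable_sinh_exp hx (by linarith : x < 2*((j:ℝ)+1) + 1)
  have e : ∀ u : ℝ, Real.sinh (x*u)*Real.exp (-(2*((j:ℝ)+1)-t)*u)
        + Real.sinh (x*u)*Real.exp (-(2*((j:ℝ)+1)+t)*u)
        - 2*(Real.sinh (x*u)*Real.exp (-(2*((j:ℝ)+1)+1)*u))
      = Real.sinh (x*u) * aaf t j u := by
    intro u; unfold aaf; ring
  have base : IntegrableOn (fun u => Real.sinh (x*u)*Real.exp (-(2*((j:ℝ)+1)-t)*u)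
        + Real.sinh (x*u)*Real.exp (-(2*((j:ℝ)+1)+t)*u)
        - 2*(Real.sinh (x*u)*Real.exp (-(2*((j:ℝ)+1)+1)*u))) (Ioi (0:ℝ)) :=
    (i1.add i2).sub (i3.const_mul 2)
  exact base.congr_fun (fun u _ => e u) measurableSet_Ioi

lemma tsum_aaf {t u : ℝ} (hu : 0 < u) : ∑' j, aaf t j u = AA t u := by
  have hr0 : 0 ≤ Real.exp (-2*u) := (Real.exp_pos _).le
  have hr1 : Real.exp (-2*u) < 1 := exp_neg_two_lt hu
  have key : ∀ j : ℕ, aaf t j u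
      = (Real.exp (-(2-t)*u) + Real.exp (-(2+t)*u) - 2*Real.exp (-3*u))
        * Real.exp (-2*u)^j := by
    intro j
    have hpow : Real.exp (-2*u)^j = Real.exp (-(2*(j:ℝ))*u) := by
      rw [← Real.exp_nat_mul]; congr 1; ring
    have m : ∀ r : ℝ, Real.exp (-r*u) * Real.exp (-(2*(j:ℝ))*u)
        = Real.exp (-(r+2*(j:ℝ))*u) := by
      intro r; rw [← Real.exp_add]; congr 1; ring
    rw [hpow, sub_mul, add_mul, m (2-t), m (2+t), mul_assoc, m 3]
    unfold aaf
    rw [show -(2*((j:ℝ)+1)-t)*u = -((2-t)+2*(j:ℝ))*u by ring,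
      show -(2*((j:ℝ)+1)+t)*u = -((2+t)+2*(j:ℝ))*u by ring,
      show -(2*((j:ℝ)+1)+1)*u = -(3+2*(j:ℝ))*u by ring]
  rw [tsum_congr key, tsum_mul_left, tsum_geometric_of_lt_one hr0 hr1]
  unfold AA
  rw [div_eq_mul_inv]

lemma AA_nonneg {t u : ℝ} (ht0 : -1 ≤ t) (ht1 : t ≤ 1) (hu : 0 < u) : 0 ≤ AA t u := by
  unfold AA
  have hd : 0 < 1 - exp (-2*u) := by linarith [exp_neg_two_lt hu]
  have h1 : Real.exp (-3*u) ≤ Real.exp (-(2-t)*u) :=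
    Real.exp_le_exp.mpr (by nlinarith [mul_nonneg (by linarith : (0:ℝ) ≤ 1+t) hu.le])
  have h2 : Real.exp (-3*u) ≤ Real.exp (-(2+t)*u) :=
    Real.exp_le_exp.mpr (by nlinarith [mul_nonneg (by linarith : (0:ℝ) ≤ 1-t) hu.le])
  exact div_nonneg (by linarith) hd.le

lemma AA_le {t u : ℝ} (ht0 : -1 ≤ t) (ht1 : t ≤ 1) (hu : 0 < u) : AA t u ≤ exp (-1 * u) := by
  unfold AA
  have hd : 0 < 1 - exp (-2*u) := by linarith [exp_neg_two_lt hu]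
  rw [div_le_iff₀ hd]
  have e2 : Real.exp (-2*u) = Real.exp (-(1-t)*u) * Real.exp (-(1+t)*u) := by
    rw [← Real.exp_add]; congr 1; ring
  have em : Real.exp (-(2-t)*u) = Real.exp (-(1-t)*u) * Real.exp (-1*u) := by
    rw [← Real.exp_add]; congr 1; ring
  have ep : Real.exp (-(2+t)*u) = Real.exp (-(1+t)*u) * Real.exp (-1*u) := by
    rw [← Real.exp_add]; congr 1; ring
  have e3 : Real.exp (-3*u) = Real.exp (-(1-t)*u) * Real.exp (-(1+t)*u) * Real.exp (-1*u) := by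
    rw [← Real.exp_add, ← Real.exp_add]; congr 1; ring
  rw [e2, em, ep, e3]
  have hp1 : Real.exp (-(1-t)*u) ≤ 1 :=
    Real.exp_le_one_iff.mpr (by nlinarith [mul_nonneg (by linarith : (0:ℝ) ≤ 1-t) hu.le])
  have hq1 : Real.exp (-(1+t)*u) ≤ 1 :=
    Real.exp_le_one_iff.mpr (by nlinarith [mul_nonneg (by linarith : (0:ℝ) ≤ 1+t) hu.le])
  have hr := Real.exp_pos (-1*u)
  nlinarith [mul_nonneg (mul_nonneg hr.le (sub_nonneg.2 hp1)) (sub_nonneg.2 hq1)]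

lemma EE_nonneg (t u : ℝ) : 0 ≤ EE t u := by
  unfold EE
  split
  · exact le_refl 0
  · exact (Real.exp_pos _).le

lemma EE_le {t u : ℝ} (ht0 : 0 ≤ t) (ht1 : t ≤ 1) (hu : 0 < u) : EE t u ≤ exp (-1 * u) := by
  unfold EE
  split
  · exact (Real.exp_pos _).le
  · next h =>
      have ht0' : 0 < t := lt_of_le_of_ne ht0 (Ne.symm h)
      apply Real.exp_le_exp.mpr
      have h1 : 1 ≤ 1/t := by
        rw [le_div_iff₀ ht0']; linarith
      nlinarith [mul_nonneg (by linarith : (0:ℝ) ≤ 1/t - 1) hu.le]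

lemma AA_continuousOn (t : ℝ) : ContinuousOn (AA t) (Ioi (0:ℝ)) := by
  unfold AA
  apply ContinuousOn.div (Continuous.continuousOn (by fun_prop))
    (Continuous.continuousOn (by fun_prop))
  intro u hu
  have h1 := exp_neg_two_lt (mem_Ioi.mp hu)
  exact ne_of_gt (by linarith)

lemma exp2w {w y1 y2 : ℝ} (h1 : 0 ≤ w) (h2 : w ≤ 1) :
    Real.exp (w*y1 + (1-w)*y2) ≤ w * Real.exp y1 + (1-w) * Real.exp y2 := by
  have := convexOn_exp.2 (Set.mem_univ y1) (Set.mem_univ y2) h1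
    (show (0:ℝ) ≤ 1 - w by linarith) (show w + (1 - w) = (1:ℝ) by ring)
  simpa [smul_eq_mul] using this

lemma exp2w_lt {w y1 y2 : ℝ} (h1 : 0 < w) (h2 : w < 1) (hy : y1 ≠ y2) :
    Real.exp (w*y1 + (1-w)*y2) < w * Real.exp y1 + (1-w) * Real.exp y2 := by
  have := strictConvexOn_exp.2 (Set.mem_univ y1) (Set.mem_univ y2) hy h1
    (show (0:ℝ) < 1 - w by linarith) (show w + (1 - w) = (1:ℝ) by ring)
  simpa [smul_eq_mul] using this

lemma exp3 {w1 w2 w3 y2 y3 : ℝ} (h1 : 0 ≤ w1) (h2 : 0 ≤ w2) (h3 : 0 ≤ w3)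
    (hs : w1 + w2 + w3 = 1) :
    Real.exp (w2*y2 + w3*y3) ≤ w1 + w2 * Real.exp y2 + w3 * Real.exp y3 := by
  by_cases hw : w2 + w3 = 0
  · have hw2 : w2 = 0 := le_antisymm (by linarith) h2
    have hw3 : w3 = 0 := le_antisymm (by linarith) h3
    rw [hw2, hw3]
    simp only [zero_mul, add_zero, zero_add]
    rw [Real.exp_zero]
    linarith
  · have hspos : 0 < w2 + w3 := lt_of_le_of_ne (by linarith) (Ne.symm hw)
    set z := (w2/(w2+w3))*y2 + (w3/(w2+w3))*y3 with hz
    have hA : Real.exp z ≤ (w2/(w2+w3)) * Real.exp y2 + (w3/(w2+w3)) * Real.exp y3 := by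
      have h2' : 0 ≤ w2/(w2+w3) := div_nonneg h2 hspos.le
      have h2'' : w2/(w2+w3) ≤ 1 := by
        rw [div_le_one hspos]; linarith
      have hsum : w3/(w2+w3) = 1 - w2/(w2+w3) := by field_simp; ring
      rw [hz, hsum]
      exact exp2w h2' h2''
    have h1w : 1 - w1 = w2 + w3 := by linarith
    have hB : Real.exp (w1*0 + (1 - w1)*z) ≤ w1 * Real.exp 0 + (1-w1)*Real.exp z :=
      exp2w h1 (by linarith)
    have harg : w1*0 + (1-w1)*z = w2*y2 + w3*y3 := by
      rw [h1w, hz]; field_simp; ring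
    rw [harg] at hB
    have hC := mul_le_mul_of_nonneg_left hA hspos.le
    have e1 : (w2+w3) * ((w2/(w2+w3)) * Real.exp y2 + (w3/(w2+w3)) * Real.exp y3)
        = w2*Real.exp y2 + w3*Real.exp y3 := by field_simp
    rw [e1] at hC
    calc Real.exp (w2*y2+w3*y3) ≤ w1 * Real.exp 0 + (1-w1)*Real.exp z := hB
      _ = w1 + (w2+w3) * Real.exp z := by rw [Real.exp_zero, h1w]; ring
      _ ≤ w1 + (w2*Real.exp y2 + w3*Real.exp y3) := by linarith
      _ = _ := by ring

set_option maxHeartbeats 1000000 in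
lemma BB_pos {t u : ℝ} (ht0 : 0 ≤ t) (ht1 : t < 1) (hu : 0 < u) : 0 < BB t u := by
  have hd : 0 < 1 - Real.exp (-2*u) := by linarith [exp_neg_two_lt hu]
  rcases eq_or_lt_of_le ht0 with h0 | h0
  · -- t = 0
    subst h0
    unfold BB AA EE
    rw [if_pos rfl, sub_zero]
    apply div_pos ?_ hd
    have h1 : Real.exp (-3*u) < Real.exp (-2*u) := Real.exp_lt_exp.mpr (by linarith)
    have e1 : Real.exp (-(2-0:ℝ)*u) = Real.exp (-2*u) := by norm_num
    have e2 : Real.exp (-(2+0:ℝ)*u) = Real.exp (-2*u) := by norm_num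
    rw [e1, e2]
    linarith
  · -- 0 < t
    have htne : t ≠ 0 := ne_of_gt h0
    have h12 : (0:ℝ) < 1 + t^2 := by positivity
    unfold BB AA EE
    rw [if_neg htne, sub_pos, lt_div_iff₀ hd]
    -- notation shortcuts via Emul
    have Emul : ∀ r s : ℝ, Real.exp (-r*u) * Real.exp (-s*u) = Real.exp (-(r+s)*u) := by
      intro r s; rw [← Real.exp_add]; congr 1; ring
    -- AM-GM fact 1 : exp(-(1+t)u) ≤ w1 + w2 X2 + w3 X3
    have fact1 : Real.exp (-(1+t)*u)
        ≤ (1/2 - t/(1+t^2)) + (1/2) * Real.exp (-(2*t)*u)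
          + (t/(1+t^2)) * Real.exp (-(t+1/t)*u) := by
      have harg : (1/2) * (-(2*t)*u) + (t/(1+t^2)) * (-(t+1/t)*u) = -(1+t)*u := by
        field_simp; ring
      have := exp3 (w1 := 1/2 - t/(1+t^2)) (w2 := (1:ℝ)/2) (w3 := t/(1+t^2))
        (y2 := -(2*t)*u) (y3 := -(t+1/t)*u)
        (by rw [sub_nonneg, div_le_div_iff₀ h12 (by norm_num : (0:ℝ) < 2)]; nlinarith [sq_nonneg (1-t)])
        (by norm_num) (by positivity) (by field_simp; ring)
      rwa [harg] at this
    -- AM-GM fact 2 (strict) : exp(-(t-2+1/t)u) < b0 + b2 X3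
    have fact2 : Real.exp (-(t-2+1/t)*u)
        < (2*t/(1+t^2)) + ((1-t)^2/(1+t^2)) * Real.exp (-(t+1/t)*u) := by
      have hw1 : 0 < 2*t/(1+t^2) := by positivity
      have hw2 : 2*t/(1+t^2) < 1 := by
        rw [div_lt_one h12]; nlinarith [sq_nonneg (1-t)]
      have hne : (0:ℝ) ≠ -(t+1/t)*u := by
        have : 0 < (t+1/t)*u := by positivity
        intro h; rw [neg_mul] at h; linarith
      have h2w : 1 - 2*t/(1+t^2) = (1-t)^2/(1+t^2) := by field_simp; ring
      have := exp2w_lt hw1 hw2 hne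
      rw [mul_zero, zero_add, h2w] at this
      have harg : (1-t)^2/(1+t^2) * (-(t+1/t)*u) = -(t-2+1/t)*u := by
        field_simp; ring
      rwa [harg, Real.exp_zero, mul_one] at this
    -- clear denominators
    have fact1' := mul_le_mul_of_nonneg_left fact1 h12.le
    have e1 : (1+t^2) * ((1/2 - t/(1+t^2)) + (1/2) * Real.exp (-(2*t)*u)
          + (t/(1+t^2)) * Real.exp (-(t+1/t)*u))
        = ((1+t^2)/2 - t) + ((1+t^2)/2) * Real.exp (-(2*t)*u)
          + t * Real.exp (-(t+1/t)*u) := by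
      field_simp
    rw [e1] at fact1'
    have fact2' := mul_lt_mul_of_pos_left fact2 h12
    have e2 : (1+t^2) * ((2*t/(1+t^2)) + ((1-t)^2/(1+t^2)) * Real.exp (-(t+1/t)*u))
        = 2*t + (1-t)^2 * Real.exp (-(t+1/t)*u) := by
      field_simp
    rw [e2] at fact2'
    -- Delta > 0
    have comb : 0 < (1+t^2) * (1 + Real.exp (-(2*t)*u) + Real.exp (-(t+1/t)*u)
        - 2*Real.exp (-(1+t)*u) - Real.exp (-(t-2+1/t)*u)) := by
      nlinarith [fact1', fact2']
    have hDelta : 0 < 1 + Real.exp (-(2*t)*u) + Real.exp (-(t+1/t)*u)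
        - 2*Real.exp (-(1+t)*u) - Real.exp (-(t-2+1/t)*u) := by
      nlinarith [comb, h12]
    -- key identity
    have key : Real.exp (-(2-t)*u) *
        (1 + Real.exp (-(2*t)*u) + Real.exp (-(t+1/t)*u)
          - 2*Real.exp (-(1+t)*u) - Real.exp (-(t-2+1/t)*u))
        = Real.exp (-(2-t)*u) + Real.exp (-(2+t)*u) - 2*Real.exp (-3*u)
          - Real.exp (-(1/t)*u) * (1 - Real.exp (-2*u)) := by
      calc Real.exp (-(2-t)*u) * (1 + Real.exp (-(2*t)*u) + Real.exp (-(t+1/t)*u)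
            - 2*Real.exp (-(1+t)*u) - Real.exp (-(t-2+1/t)*u))
          = Real.exp (-(2-t)*u)
            + Real.exp (-(2-t)*u) * Real.exp (-(2*t)*u)
            + Real.exp (-(2-t)*u) * Real.exp (-(t+1/t)*u)
            - 2*(Real.exp (-(2-t)*u) * Real.exp (-(1+t)*u))
            - Real.exp (-(2-t)*u) * Real.exp (-(t-2+1/t)*u) := by ring
        _ = Real.exp (-(2-t)*u) + Real.exp (-((2-t)+2*t)*u) + Real.exp (-((2-t)+(t+1/t))*u)
            - 2*Real.exp (-((2-t)+(1+t))*u) - Real.exp (-((2-t)+(t-2+1/t))*u) := by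
            rw [Emul, Emul, Emul, Emul]
        _ = _ := by
            rw [show (2-t)+2*t = 2+t by ring, show (2-t)+(1+t) = (3:ℝ) by ring,
              show (2-t)+(t+1/t) = 1/t+2 by ring, show (2-t)+(t-2+1/t) = 1/t by ring,
              ← Emul (1/t) 2]
            ring
    nlinarith [mul_pos (Real.exp_pos (-(2-t)*u)) hDelta, key]

lemma integrable_sinh_AA {t x : ℝ} (ht0 : 0 ≤ t) (ht1 : t < 1) (hx : 0 ≤ x) (hx1 : x < 1) :
    IntegrableOn (fun u => Real.sinh (x * u) * AA t u) (Ioi (0:ℝ)) := by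
  have hmeas : AEStronglyMeasurable (fun u => Real.sinh (x*u) * AA t u)
      (volume.restrict (Ioi (0:ℝ))) := by
    apply AEStronglyMeasurable.mul
    · exact Continuous.aestronglyMeasurable (by fun_prop)
    · exact (AA_continuousOn t).aestronglyMeasurable measurableSet_Ioi
  refine Integrable.mono (integrable_sinh_exp hx (by linarith : x < 1)) hmeas ?_
  rw [ae_restrict_iff' measurableSet_Ioi]
  refine ae_of_all _ (fun u hu => ?_)
  have hu0 : (0:ℝ) < u := hu
  have hs : 0 ≤ Real.sinh (x*u) := Real.sinh_nonneg_iff.mpr (mul_nonneg hx hu0.le)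
  rw [Real.norm_eq_abs, Real.norm_eq_abs,
    abs_of_nonneg (mul_nonneg hs (AA_nonneg (by linarith) ht1.le hu0)),
    abs_of_nonneg (mul_nonneg hs (Real.exp_pos _).le)]
  exact mul_le_mul_of_nonneg_left (AA_le (by linarith) ht1.le hu0) hs

lemma integrable_sinh_EE {t x : ℝ} (ht0 : 0 ≤ t) (ht1 : t < 1) (hx : 0 ≤ x) (hx1 : x < 1) :
    IntegrableOn (fun u => Real.sinh (x * u) * EE t u) (Ioi (0:ℝ)) := by
  rcases eq_or_ne t 0 with h | h
  · have e : (fun u => Real.sinh (x*u) * EE t u) = (fun _ : ℝ => (0:ℝ)) := by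
      funext u; rw [EE, if_pos h, mul_zero]
    rw [e]
    exact integrableOn_zero
  · have ht0' : 0 < t := lt_of_le_of_ne ht0 (Ne.symm h)
    have h1t : (1:ℝ) < 1/t := by rw [lt_div_iff₀ ht0']; linarith
    have base := integrable_sinh_exp hx (lt_trans hx1 h1t)
    have e : ∀ u : ℝ, Real.sinh (x*u) * Real.exp (-(1/t)*u) = Real.sinh (x*u) * EE t u :=
      fun u => by rw [EE, if_neg h]
    exact base.congr_fun (fun u _ => e u) measurableSet_Ioi

lemma SS_rep {t x : ℝ} (ht0 : 0 ≤ t) (ht1 : t < 1) (hx : 0 ≤ x) (hx1 : x < 1) :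
    ∑' j, GG t x j = ∫ u in Ioi (0:ℝ), Real.sinh (x * u) * AA t u := by
  have hx2 : x^2 < 1 := by nlinarith
  have hmeas : ∀ j : ℕ, AEStronglyMeasurable (fun u => Real.sinh (x*u) * aaf t j u)
      (volume.restrict (Ioi (0:ℝ))) := by
    intro j
    refine Continuous.aestronglyMeasurable ?_
    unfold aaf
    fun_prop
  have hGGnn : ∀ j, 0 ≤ GG t x j := by
    intro j
    rw [← integral_aaf ht0 ht1 hx hx1 j]
    apply setIntegral_nonneg measurableSet_Ioi
    intro u hu
    exact mul_nonneg (Real.sinh_nonneg_iff.mpr (mul_nonneg hx (le_of_lt hu)))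
      (aaf_nonneg (by linarith) ht1.le j (le_of_lt hu))
  have hsum : Summable (GG t x) := summable_GG hx2 (by linarith) ht1.le
  have hlint : ∑' j, ∫⁻ u in Ioi (0:ℝ), ‖Real.sinh (x*u) * aaf t j u‖₊ ∂volume ≠ ⊤ := by
    have heq : ∀ j : ℕ, (∫⁻ u in Ioi (0:ℝ), ‖Real.sinh (x*u) * aaf t j u‖₊ ∂volume)
        = ENNReal.ofReal (GG t x j) := by
      intro j
      have hnn : ∀ᵐ u ∂(volume.restrict (Ioi (0:ℝ))), 0 ≤ Real.sinh (x*u) * aaf t j u :=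
        (ae_restrict_iff' measurableSet_Ioi).mpr (ae_of_all _ (fun u hu =>
          mul_nonneg (Real.sinh_nonneg_iff.mpr (mul_nonneg hx (le_of_lt hu)))
            (aaf_nonneg (by linarith) ht1.le j (le_of_lt hu))))
      have h1 : (∫⁻ u in Ioi (0:ℝ), ‖Real.sinh (x*u) * aaf t j u‖₊ ∂volume)
          = ∫⁻ u in Ioi (0:ℝ), ENNReal.ofReal (Real.sinh (x*u) * aaf t j u) ∂volume := by
        apply lintegral_congr_ae
        filter_upwards [hnn] with u hu
        exact Real.enorm_eq_ofReal hu
      rw [h1, ← ofReal_integral_eq_lintegral_ofReal (integrable_sinh_aaf ht0 ht1 hx hx1 j) hnn,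
        integral_aaf ht0 ht1 hx hx1 j]
    rw [tsum_congr heq, ← ENNReal.ofReal_tsum_of_nonneg hGGnn hsum]
    exact ENNReal.ofReal_ne_top
  calc ∑' j, GG t x j
      = ∑' j, ∫ u in Ioi (0:ℝ), Real.sinh (x*u) * aaf t j u :=
        tsum_congr fun j => (integral_aaf ht0 ht1 hx hx1 j).symm
    _ = ∫ u in Ioi (0:ℝ), ∑' j, Real.sinh (x*u) * aaf t j u :=
        (integral_tsum hmeas hlint).symm
    _ = ∫ u in Ioi (0:ℝ), Real.sinh (x*u) * AA t u := by
        apply setIntegral_congr_fun measurableSet_Ioi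
        intro u hu
        show (∑' j, Real.sinh (x*u) * aaf t j u) = Real.sinh (x*u) * AA t u
        rw [tsum_mul_left, tsum_aaf hu]

lemma K_rep {t x : ℝ} (ht0 : 0 ≤ t) (ht1 : t < 1) (hx : 0 ≤ x) (hx1 : x < 1) :
    t ^ 2 * x / (1 - t ^ 2 * x ^ 2) = ∫ u in Ioi (0:ℝ), Real.sinh (x * u) * EE t u := by
  rcases eq_or_ne t 0 with h | h
  · subst h
    have e : ∀ u ∈ Ioi (0:ℝ), Real.sinh (x*u) * EE 0 u = (0:ℝ) :=
      fun u _ => by rw [EE, if_pos rfl, mul_zero]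
    rw [setIntegral_congr_fun measurableSet_Ioi e]
    simp
  · have ht0' : 0 < t := lt_of_le_of_ne ht0 (Ne.symm h)
    have h1t : (1:ℝ) < 1/t := by rw [lt_div_iff₀ ht0']; linarith
    have e : ∀ u ∈ Ioi (0:ℝ), Real.sinh (x*u) * EE t u
        = Real.sinh (x*u) * Real.exp (-(1/t)*u) := fun u _ => by rw [EE, if_neg h]
    rw [setIntegral_congr_fun measurableSet_Ioi e, laplace_sinh hx (lt_trans hx1 h1t)]
    have hxsq : x^2 < 1 := by nlinarith
    have htsq : t^2 < 1 := by nlinarith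
    have d1 : (0:ℝ) < 1 - t^2*x^2 := by nlinarith [sq_nonneg x, sq_nonneg t]
    have d2 : (0:ℝ) < (1/t)^2 - x^2 := by
      have hxt : x < 1/t := lt_trans hx1 h1t
      nlinarith
    field_simp

lemma diff_rep {t x : ℝ} (ht0 : 0 ≤ t) (ht1 : t < 1) (hx : 0 ≤ x) (hx1 : x < 1) :
    kII 1 x - kII t x = ∫ u in Ioi (0:ℝ), Real.sinh (x * u) * BB t u := by
  have hx2 : x^2 < 1 := by nlinarith
  have iA := integrable_sinh_AA ht0 ht1 hx hx1
  have iE := integrable_sinh_EE ht0 ht1 hx hx1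
  rw [diff_eq hx2 (by linarith) ht1.le, SS_rep ht0 ht1 hx hx1, K_rep ht0 ht1 hx hx1]
  have e : ∫ u in Ioi (0:ℝ), Real.sinh (x*u) * BB t u
      = ∫ u in Ioi (0:ℝ), (Real.sinh (x*u) * AA t u - Real.sinh (x*u) * EE t u) := by
    apply setIntegral_congr_fun measurableSet_Ioi
    intro u _
    unfold BB
    ring
  rw [e, integral_sub iA iE]
  ring

lemma diff_mono_right {t x y : ℝ} (ht0 : 0 ≤ t) (ht1 : t < 1) (hx : 0 ≤ x) (hxy : x < y)
    (hy1 : y < 1) : kII 1 x - kII t x < kII 1 y - kII t y := by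
  have hy0 : (0:ℝ) ≤ y := by linarith
  have iBx : IntegrableOn (fun u => Real.sinh (x*u) * BB t u) (Ioi (0:ℝ)) := by
    have e : ∀ u : ℝ, Real.sinh (x*u) * AA t u - Real.sinh (x*u) * EE t u
        = Real.sinh (x*u) * BB t u := fun u => by unfold BB; ring
    have base : IntegrableOn
        (fun u => Real.sinh (x*u) * AA t u - Real.sinh (x*u) * EE t u) (Ioi (0:ℝ)) :=
      (integrable_sinh_AA ht0 ht1 hx (by linarith)).sub
        (integrable_sinh_EE ht0 ht1 hx (by linarith))
    exact base.congr_fun (fun u _ => e u) measurableSet_Ioi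
  have iBy : IntegrableOn (fun u => Real.sinh (y*u) * BB t u) (Ioi (0:ℝ)) := by
    have e : ∀ u : ℝ, Real.sinh (y*u) * AA t u - Real.sinh (y*u) * EE t u
        = Real.sinh (y*u) * BB t u := fun u => by unfold BB; ring
    have base : IntegrableOn
        (fun u => Real.sinh (y*u) * AA t u - Real.sinh (y*u) * EE t u) (Ioi (0:ℝ)) :=
      (integrable_sinh_AA ht0 ht1 hy0 hy1).sub (integrable_sinh_EE ht0 ht1 hy0 hy1)
    exact base.congr_fun (fun u _ => e u) measurableSet_Ioi
  rw [diff_rep ht0 ht1 hx (by linarith), diff_rep ht0 ht1 hy0 hy1, ← sub_pos,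
    ← integral_sub iBy iBx]
  have hnn : ∀ᵐ u ∂(volume.restrict (Ioi (0:ℝ))),
      0 ≤ Real.sinh (y*u) * BB t u - Real.sinh (x*u) * BB t u := by
    rw [ae_restrict_iff' measurableSet_Ioi]
    refine ae_of_all _ (fun u hu => ?_)
    have hu0 : (0:ℝ) < u := hu
    have hsle : Real.sinh (x*u) ≤ Real.sinh (y*u) :=
      Real.sinh_le_sinh.mpr (by nlinarith)
    nlinarith [BB_pos ht0 ht1 hu0, hsle]
  rw [integral_pos_iff_support_of_nonneg_ae hnn (iBy.sub iBx)]
  have hsub : Ioi (0:ℝ) ⊆ Function.support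
      (fun u => Real.sinh (y*u) * BB t u - Real.sinh (x*u) * BB t u) := by
    intro u hu
    have hu0 : (0:ℝ) < u := hu
    have hslt : Real.sinh (x*u) < Real.sinh (y*u) :=
      Real.sinh_lt_sinh.mpr (by nlinarith)
    have : 0 < Real.sinh (y*u) * BB t u - Real.sinh (x*u) * BB t u := by
      nlinarith [BB_pos ht0 ht1 hu0]
    exact ne_of_gt this
  refine lt_of_lt_of_le ?_ (measure_mono hsub)
  rw [Measure.restrict_apply_self, Real.volume_Ioi]
  exact ENNReal.zero_lt_top

lemma kII_odd (t x : ℝ) : kII t (-x) = -kII t x := by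
  unfold kII
  rw [neg_add, ← tsum_neg]
  congr 1
  · ring
  · exact tsum_congr fun j => by ring

lemma kII_neg_t (t : ℝ) : kII (-t) = kII t := by
  funext x
  unfold kII
  congr 1
  · ring
  · exact tsum_congr fun j => by ring

lemma diff_strictMonoOn {t : ℝ} (ht0 : 0 ≤ t) (ht1 : t < 1) :
    StrictMonoOn (fun x => kII 1 x - kII t x) (Ioo (-1 : ℝ) 1) := by
  have odd : ∀ z : ℝ, kII 1 (-z) - kII t (-z) = -(kII 1 z - kII t z) := fun z => by
    rw [kII_odd, kII_odd]; ring
  have f0 : kII 1 0 - kII t 0 = 0 := by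
    have h := odd 0
    rw [neg_zero] at h
    linarith
  intro a ha b hb hab
  show kII 1 a - kII t a < kII 1 b - kII t b
  rcases le_or_gt 0 a with h0a | h0a
  · exact diff_mono_right ht0 ht1 h0a hab hb.2
  · rcases le_or_gt b 0 with hb0 | hb0
    · have h := diff_mono_right ht0 ht1 (by linarith : (0:ℝ) ≤ -b)
        (by linarith : -b < -a) (by linarith [ha.1] : -a < 1)
      rw [odd a, odd b] at h
      linarith
    · have h1 := diff_mono_right ht0 ht1 le_rfl (by linarith : (0:ℝ) < -a)
        (by linarith [ha.1] : -a < 1)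
      have h2 := diff_mono_right ht0 ht1 le_rfl hb0 hb.2
      rw [f0] at h1 h2
      have h3 := odd a
      linarith

/-! ### The transfer operator machinery -/

def OddOn (f : ℝ → ℝ) : Prop := ∀ x ∈ Ioo (-1 : ℝ) 1, f (-x) = -f x

def Good (f : ℝ → ℝ) : Prop := Bdd f ∧ OddOn f ∧ StrictMonoOn f (Ioo (-1 : ℝ) 1)

lemma abs_shift {x : ℝ} (hx : x ∈ Ioo (-1 : ℝ) 1) (i : {i : ℤ // i ≠ 0}) :
    |((i : ℤ) : ℝ)| ≤ |x + 2 * ((i : ℤ) : ℝ)| ∧ 1 < |x + 2 * ((i : ℤ) : ℝ)| := by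
  obtain ⟨h1, h2⟩ := hx
  have hxa : |x| < 1 := abs_lt.mpr ⟨h1, h2⟩
  have hi : (1:ℝ) ≤ |((i : ℤ) : ℝ)| := by
    rw [← Int.cast_abs]
    exact_mod_cast Int.one_le_abs i.2
  have h2i : |2 * ((i : ℤ) : ℝ)| = 2 * |((i : ℤ) : ℝ)| := by
    rw [abs_mul]; norm_num
  have h3 : |2 * ((i : ℤ) : ℝ)| - |(-x)| ≤ |2 * ((i : ℤ) : ℝ) - (-x)| :=
    abs_sub_abs_le_abs_sub _ _
  rw [abs_neg, show 2 * ((i : ℤ) : ℝ) - (-x) = x + 2 * ((i : ℤ) : ℝ) by ring, h2i] at h3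
  constructor
  · linarith
  · linarith

lemma arg_mem {x : ℝ} (hx : x ∈ Ioo (-1 : ℝ) 1) (i : {i : ℤ // i ≠ 0}) :
    -1 / (x + 2 * ((i : ℤ) : ℝ)) ∈ Ioo (-1 : ℝ) 1 := by
  obtain ⟨hle, hlt⟩ := abs_shift hx i
  rw [mem_Ioo, ← abs_lt, abs_div, abs_neg, abs_one, div_lt_one (by linarith)]
  exact hlt

lemma term_abs_le {f : ℝ → ℝ} {M : ℝ} (hM : ∀ x ∈ Ioo (-1 : ℝ) 1, |f x| ≤ M)
    {x : ℝ} (hx : x ∈ Ioo (-1 : ℝ) 1) (i : {i : ℤ // i ≠ 0}) :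
    |(1 / (x + 2 * ((i : ℤ) : ℝ)) ^ 2) * f (-1 / (x + 2 * ((i : ℤ) : ℝ)))|
      ≤ M * (1 / ((i : ℤ) : ℝ) ^ 2) := by
  have hM0 : 0 ≤ M := le_trans (abs_nonneg _) (hM 0 (by constructor <;> norm_num))
  obtain ⟨hle, hlt⟩ := abs_shift hx i
  have hz := arg_mem hx i
  have hsq : ((i : ℤ) : ℝ)^2 ≤ (x + 2 * ((i : ℤ) : ℝ))^2 := by
    rw [← sq_abs ((i : ℤ) : ℝ), ← sq_abs (x + 2 * ((i : ℤ) : ℝ))]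
    exact pow_le_pow_left₀ (abs_nonneg _) hle 2
  have hipos : (0:ℝ) < ((i : ℤ) : ℝ)^2 := by
    have hne : ((i : ℤ) : ℝ) ≠ 0 := Int.cast_ne_zero.mpr i.2
    positivity
  rw [abs_mul, abs_of_nonneg (one_div_nonneg.mpr (sq_nonneg (x + 2 * ((i : ℤ) : ℝ))))]
  calc 1 / (x + 2 * ((i : ℤ) : ℝ))^2 * |f (-1 / (x + 2 * ((i : ℤ) : ℝ)))|
      ≤ 1 / (x + 2 * ((i : ℤ) : ℝ))^2 * M :=
        mul_le_mul_of_nonneg_left (hM _ hz)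
          (one_div_nonneg.mpr (sq_nonneg (x + 2 * ((i : ℤ) : ℝ))))
    _ ≤ 1 / ((i : ℤ) : ℝ)^2 * M :=
        mul_le_mul_of_nonneg_right (one_div_le_one_div_of_le hipos hsq) hM0
    _ = M * (1 / ((i : ℤ) : ℝ)^2) := by ring

lemma summable_base : Summable (fun i : {i : ℤ // i ≠ 0} => 1 / ((i : ℤ) : ℝ) ^ 2) := by
  have h1 : Summable (fun n : ℤ => 1 / (n : ℝ) ^ 2) :=
    Real.summable_one_div_int_pow.mpr one_lt_two
  exact h1.comp_injective Subtype.val_injective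

lemma summable_term_abs {f : ℝ → ℝ} {M : ℝ} (hM : ∀ x ∈ Ioo (-1 : ℝ) 1, |f x| ≤ M)
    {x : ℝ} (hx : x ∈ Ioo (-1 : ℝ) 1) :
    Summable (fun i : {i : ℤ // i ≠ 0} =>
      |(1 / (x + 2 * ((i : ℤ) : ℝ)) ^ 2) * f (-1 / (x + 2 * ((i : ℤ) : ℝ)))|) := by
  refine Summable.of_nonneg_of_le (fun i => abs_nonneg _) (fun i => term_abs_le hM hx i)
    (summable_base.mul_left M)

lemma summable_term {f : ℝ → ℝ} {M : ℝ} (hM : ∀ x ∈ Ioo (-1 : ℝ) 1, |f x| ≤ M)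
    {x : ℝ} (hx : x ∈ Ioo (-1 : ℝ) 1) :
    Summable (fun i : {i : ℤ // i ≠ 0} =>
      (1 / (x + 2 * ((i : ℤ) : ℝ)) ^ 2) * f (-1 / (x + 2 * ((i : ℤ) : ℝ)))) :=
  (summable_term_abs hM hx).of_abs

lemma Bdd_T {f : ℝ → ℝ} (hf : Bdd f) : Bdd (Tsub 1 f) := by
  obtain ⟨M, hM⟩ := hf
  refine ⟨M * ∑' i : {i : ℤ // i ≠ 0}, (1 / ((i : ℤ) : ℝ) ^ 2), fun x hx => ?_⟩
  unfold Tsub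
  have h1 := summable_term_abs hM hx
  have h2 : |∑' i : {i : ℤ // i ≠ 0},
      (1 / (x + 2 * ((i : ℤ) : ℝ)) ^ 2) * f (-1 / (x + 2 * ((i : ℤ) : ℝ)))|
      ≤ ∑' i : {i : ℤ // i ≠ 0},
        |(1 / (x + 2 * ((i : ℤ) : ℝ)) ^ 2) * f (-1 / (x + 2 * ((i : ℤ) : ℝ)))| := by
    have h1' : Summable (fun i : {i : ℤ // i ≠ 0} =>
        ‖(1 / (x + 2 * ((i : ℤ) : ℝ)) ^ 2) * f (-1 / (x + 2 * ((i : ℤ) : ℝ)))‖) := by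
      simpa only [Real.norm_eq_abs] using h1
    have h2' := norm_tsum_le_tsum_norm h1'
    simpa only [Real.norm_eq_abs] using h2'
  have h3 := Summable.tsum_le_tsum (fun i => term_abs_le hM hx i) h1 (summable_base.mul_left M)
  rw [tsum_mul_left] at h3
  calc |∑' i : {i : ℤ // i ≠ 0},
      (1 / (x + 2 * ((i : ℤ) : ℝ)) ^ 2) * f (-1 / (x + 2 * ((i : ℤ) : ℝ)))| ≤ _ := h2
    _ ≤ _ := h3

lemma OddOn_T {f : ℝ → ℝ} (hf : OddOn f) : OddOn (Tsub 1 f) := by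
  intro x hx
  unfold Tsub
  let e : {i : ℤ // i ≠ 0} ≃ {i : ℤ // i ≠ 0} :=
    (Equiv.neg ℤ).subtypeEquiv (fun a => by simp)
  rw [← Equiv.tsum_eq e (fun i : {i : ℤ // i ≠ 0} =>
    (1 / (-x + 2 * ((i : ℤ) : ℝ)) ^ 2) * f (-1 / (-x + 2 * ((i : ℤ) : ℝ)))), ← tsum_neg]
  apply tsum_congr
  intro i
  have hval : (((e i : {i : ℤ // i ≠ 0}) : ℤ) : ℝ) = -((i : ℤ) : ℝ) := by
    show (((((Equiv.neg ℤ).subtypeEquiv (fun a => by simp)) i : {i : ℤ // i ≠ 0}) : ℤ) : ℝ) = _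
    rw [Equiv.subtypeEquiv_apply]
    simp [Equiv.neg_apply]
  rw [hval, show -x + 2 * -((i : ℤ) : ℝ) = -(x + 2 * ((i : ℤ) : ℝ)) by ring,
    show (-1 : ℝ) / -(x + 2 * ((i : ℤ) : ℝ)) = -(-1 / (x + 2 * ((i : ℤ) : ℝ))) from by
      rw [neg_div_neg_eq, neg_div, neg_neg],
    hf _ (arg_mem hx i)]
  ring

lemma zero_of_odd {f : ℝ → ℝ} (hf : OddOn f) : f 0 = 0 := by
  have h := hf 0 (by constructor <;> norm_num)
  rw [neg_zero] at h
  linarith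

lemma term_lt_term {f : ℝ → ℝ} (hodd : OddOn f) (hmono : StrictMonoOn f (Ioo (-1 : ℝ) 1))
    {x y : ℝ} (hx : x ∈ Ioo (-1 : ℝ) 1) (hy : y ∈ Ioo (-1 : ℝ) 1) (hxy : x < y)
    (i : {i : ℤ // i ≠ 0}) :
    (1 / (x + 2 * ((i : ℤ) : ℝ)) ^ 2) * f (-1 / (x + 2 * ((i : ℤ) : ℝ))) <
      (1 / (y + 2 * ((i : ℤ) : ℝ)) ^ 2) * f (-1 / (y + 2 * ((i : ℤ) : ℝ))) := by
  have hf0 : f 0 = 0 := zero_of_odd hodd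
  have hvx := arg_mem hx i
  have hvy := arg_mem hy i
  have h0mem : (0:ℝ) ∈ Ioo (-1:ℝ) 1 := by constructor <;> norm_num
  set n : ℝ := ((i : ℤ) : ℝ) with hn
  have huu' : x + 2*n < y + 2*n := by linarith
  rcases lt_or_gt_of_ne i.2 with hineg | hipos
  · -- i ≤ -1
    have hn1 : n ≤ -1 := by
      rw [hn]; exact_mod_cast (by omega : (i : ℤ) ≤ -1)
    set u : ℝ := x + 2*n with hu
    set u' : ℝ := y + 2*n with hu'
    have hu'neg : u' < -1 := by rw [hu']; linarith [hy.2]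
    have huneg : u < -1 := by linarith
    have hu2 : (0:ℝ) < u^2 := by nlinarith
    have hu'2 : (0:ℝ) < u'^2 := by nlinarith
    have hvlt : -1/u < -1/u' := by
      have hune : u ≠ 0 := ne_of_lt (by linarith)
      have hu'ne : u' ≠ 0 := ne_of_lt (by linarith)
      have key : (-1)/u' - (-1)/u = (u' - u)/(u*u') := by
        field_simp
        ring
      have hpos : 0 < (u'-u)/(u*u') :=
        div_pos (by linarith) (mul_pos_of_neg_of_neg (by linarith) (by linarith))
      linarith
    have hfv : f (-1/u) < f (-1/u') := hmono hvx hvy hvlt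
    have hv0 : 0 < -1/u := by
      have h1u : 1/u < 0 := div_neg_of_pos_of_neg one_pos (by linarith)
      rw [neg_div]; linarith
    have hfvpos : 0 < f (-1/u) := by
      have h := hmono h0mem hvx hv0
      rwa [hf0] at h
    have hsq : u'^2 < u^2 := by nlinarith
    have hinv2 : 1/u^2 < 1/u'^2 := one_div_lt_one_div_of_lt hu'2 hsq
    have step1 : 1/u^2 * f (-1/u) < 1/u'^2 * f (-1/u) :=
      mul_lt_mul_of_pos_right hinv2 hfvpos
    have step2 : 1/u'^2 * f (-1/u) < 1/u'^2 * f (-1/u') :=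
      mul_lt_mul_of_pos_left hfv (one_div_pos.mpr hu'2)
    linarith
  · -- i ≥ 1
    have hn1 : (1:ℝ) ≤ n := by
      rw [hn]; exact_mod_cast (by omega : (1 : ℤ) ≤ (i : ℤ))
    set u : ℝ := x + 2*n with hu
    set u' : ℝ := y + 2*n with hu'
    have hu1 : 1 < u := by rw [hu]; linarith [hx.1]
    have hupos : (0:ℝ) < u := by linarith
    have hu'pos : (0:ℝ) < u' := by linarith
    have hu2 : (0:ℝ) < u^2 := by nlinarith
    have hu'2 : (0:ℝ) < u'^2 := by nlinarith
    have hvlt : -1/u < -1/u' := by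
      have hinv : 1/u' < 1/u := one_div_lt_one_div_of_lt hupos huu'
      rw [neg_div, neg_div]; linarith
    have hfv : f (-1/u) < f (-1/u') := hmono hvx hvy hvlt
    have hv0 : -1/u' < 0 := by
      have h1u : 0 < 1/u' := one_div_pos.mpr hu'pos
      rw [neg_div]; linarith
    have hfv'0 : f (-1/u') < 0 := by
      have h := hmono hvy h0mem hv0
      rwa [hf0] at h
    have hsq : u^2 < u'^2 := by nlinarith
    have hinv2 : 1/u'^2 < 1/u^2 := one_div_lt_one_div_of_lt hu2 hsq
    have step1 : 1/u^2 * f (-1/u) < 1/u^2 * f (-1/u') :=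
      mul_lt_mul_of_pos_left hfv (one_div_pos.mpr hu2)
    have step2 : 1/u^2 * f (-1/u') < 1/u'^2 * f (-1/u') :=
      mul_lt_mul_of_neg_right hinv2 hfv'0
    linarith

lemma StrictMonoOn_T {f : ℝ → ℝ} (hf : Good f) : StrictMonoOn (Tsub 1 f) (Ioo (-1 : ℝ) 1) := by
  obtain ⟨⟨M, hM⟩, hodd, hmono⟩ := hf
  intro x hx y hy hxy
  unfold Tsub
  exact Summable.tsum_lt_tsum (fun i => le_of_lt (term_lt_term hodd hmono hx hy hxy i))
    (term_lt_term hodd hmono hx hy hxy ⟨1, one_ne_zero⟩)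
    (summable_term hM hx) (summable_term hM hy)

lemma Good_T {f : ℝ → ℝ} (hf : Good f) : Good (Tsub 1 f) :=
  ⟨Bdd_T hf.1, OddOn_T hf.2.1, StrictMonoOn_T hf⟩

lemma Good_iter {f : ℝ → ℝ} (hf : Good f) (m : ℕ) : Good ((Tsub 1)^[m] f) := by
  induction m with
  | zero => exact hf
  | succ n ih => rw [Function.iterate_succ_apply']; exact Good_T ih

lemma Bdd_iter {f : ℝ → ℝ} (hf : Bdd f) (m : ℕ) : Bdd ((Tsub 1)^[m] f) := by
  induction m with
  | zero => exact hf
  | succ n ih => rw [Function.iterate_succ_apply']; exact Bdd_T ih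

lemma Tsub_congr {f g : ℝ → ℝ} (h : ∀ z ∈ Ioo (-1 : ℝ) 1, f z = g z) {x : ℝ}
    (hx : x ∈ Ioo (-1 : ℝ) 1) : Tsub 1 f x = Tsub 1 g x := by
  unfold Tsub
  exact tsum_congr fun i => by rw [h _ (arg_mem hx i)]

lemma Tsub_sub {f g : ℝ → ℝ} (hf : Bdd f) (hg : Bdd g) {x : ℝ} (hx : x ∈ Ioo (-1 : ℝ) 1) :
    Tsub 1 (fun y => f y - g y) x = Tsub 1 f x - Tsub 1 g x := by
  obtain ⟨Mf, hMf⟩ := hf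
  obtain ⟨Mg, hMg⟩ := hg
  unfold Tsub
  rw [← Summable.tsum_sub (summable_term hMf hx) (summable_term hMg hx)]
  refine tsum_congr fun i => ?_
  show (1 / (x + 2 * ((i : ℤ) : ℝ)) ^ 2) *
      (f (-1 / (x + 2 * ((i : ℤ) : ℝ))) - g (-1 / (x + 2 * ((i : ℤ) : ℝ)))) = _
  ring

lemma iter_sub {f g : ℝ → ℝ} (hf : Bdd f) (hg : Bdd g) (m : ℕ) :
    ∀ x ∈ Ioo (-1 : ℝ) 1,
      (Tsub 1)^[m] (fun y => f y - g y) x = (Tsub 1)^[m] f x - (Tsub 1)^[m] g x := by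
  induction m with
  | zero => intro x hx; simp
  | succ n ih =>
    intro x hx
    rw [Function.iterate_succ_apply', Function.iterate_succ_apply',
      Function.iterate_succ_apply']
    calc Tsub 1 ((Tsub 1)^[n] fun y => f y - g y) x
        = Tsub 1 (fun y => (Tsub 1)^[n] f y - (Tsub 1)^[n] g y) x :=
          Tsub_congr (fun z hz => ih z hz) hx
      _ = _ := Tsub_sub (Bdd_iter hf n) (Bdd_iter hg n) hx

end KIIAux

open KIIAux in
/-- For fixed `t ∈ (-1,1)` and each `j`, the iterate `T₁^j[k₁^{II}(1,·) - k₁^{II}(t,·)]`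
is well defined (all series converge absolutely), odd, and strictly increasing on `(-1,1)`;
in particular `T₁^j k₁^{II}(t,·) < T₁^j k₁^{II}(1,·)` on `(0,1)`. -/
theorem iterates_of_kII_difference_odd_strictMono
    (t : ℝ) (ht : t ∈ Ioo (-1 : ℝ) 1) (j : ℕ) :
    (∀ m : ℕ, m < j → ∀ x ∈ Ioo (-1 : ℝ) 1,
      Summable (fun i : {i : ℤ // i ≠ 0} =>
        |(1 / (x + 2 * ((i : ℤ) : ℝ)) ^ 2) *
          ((Tsub 1)^[m] (fun y => kII 1 y - kII t y)) (-1 / (x + 2 * ((i : ℤ) : ℝ)))|)) ∧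
    (∀ x ∈ Ioo (-1 : ℝ) 1,
      ((Tsub 1)^[j] (fun y => kII 1 y - kII t y)) (-x) =
        -((Tsub 1)^[j] (fun y => kII 1 y - kII t y)) x) ∧
    StrictMonoOn ((Tsub 1)^[j] (fun y => kII 1 y - kII t y)) (Ioo (-1 : ℝ) 1) ∧
    (∀ x ∈ Ioo (0 : ℝ) 1, ((Tsub 1)^[j] (kII t)) x < ((Tsub 1)^[j] (kII 1)) x) := by
  obtain ⟨ht1, ht2⟩ := ht
  have habs : kII t = kII |t| := by
    rcases abs_choice t with h | h
    · rw [h]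
    · rw [h, kII_neg_t]
  have hs0 : 0 ≤ |t| := abs_nonneg t
  have hs1 : |t| < 1 := abs_lt.mpr ⟨ht1, ht2⟩
  have hb1 : Bdd (kII 1) := kII_one_bounded
  have hbt : Bdd (kII t) := kII_bounded ht1 ht2
  have hgood : Good (fun y => kII 1 y - kII t y) := by
    refine ⟨?_, ?_, ?_⟩
    · obtain ⟨M1, hM1⟩ := hb1
      obtain ⟨M2, hM2⟩ := hbt
      exact ⟨M1 + M2, fun x hx => (abs_sub _ _).trans (add_le_add (hM1 x hx) (hM2 x hx))⟩
    · intro x _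
      show kII 1 (-x) - kII t (-x) = -(kII 1 x - kII t x)
      rw [kII_odd, kII_odd]; ring
    · rw [habs]
      exact diff_strictMonoOn hs0 hs1
  constructor
  · intro m _ x hx
    obtain ⟨M, hM⟩ := (Good_iter hgood m).1
    exact summable_term_abs hM hx
  refine ⟨fun x hx => (Good_iter hgood j).2.1 x hx, (Good_iter hgood j).2.2, ?_⟩
  intro x hx
  have hx' : x ∈ Ioo (-1 : ℝ) 1 := ⟨by linarith [hx.1], hx.2⟩
  have h0 : (0 : ℝ) ∈ Ioo (-1 : ℝ) 1 := by constructor <;> norm_num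
  have heq := iter_sub hb1 hbt j x hx'
  have hpos : 0 < ((Tsub 1)^[j] (fun y => kII 1 y - kII t y)) x := by
    have hz : ((Tsub 1)^[j] (fun y => kII 1 y - kII t y)) 0 = 0 :=
      zero_of_odd (Good_iter hgood j).2.1
    rw [← hz]
    exact (Good_iter hgood j).2.2 h0 hx' hx.1
  rw [heq] at hpos
  linarith
end

section
/- Let γ > 0 and let (a_j)_{j≥0} be real numbers such that the power series f(x) := ∑_{j=0}^{∞} a_j x^j converges for |x| < γ. Assume that one of the following holds: (a) a_j ≥ 0 for all j; (b) a_j ≤ 0 for all j; or (c) there exists j₀ ∈ ℕ with a_j ≥ 0 for j ≤ j₀ and a_j ≤ 0 for j > j₀. If f does not vanish identically on (−γ,γ), then f has at most one zero in the open interval (0,γ); and if x₀ ∈ (0,γ) satisfies f(x₀) = 0, then f(x) > 0 for 0 < x < x₀ and f(x) < 0 for x₀ < x < γ. -/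
open Set

private lemma mul_nonneg_of_nonpos_nonpos' {a b : ℝ} (ha : a ≤ 0) (hb : b ≤ 0) : 0 ≤ a * b := by
  nlinarith

/-- Core estimate, left side: if the coefficients change sign once at `j₀`, the series
vanishes at `x₀ > 0`, and some coefficient away from `j₀` is nonzero, then the series is
positive at `0 < x < x₀`. -/
lemma powerSeries_core_left (a : ℕ → ℝ) (j₀ : ℕ)
    (h1 : ∀ j ≤ j₀, 0 ≤ a j) (h2 : ∀ j, j₀ < j → a j ≤ 0)
    (j' : ℕ) (hj' : a j' ≠ 0) (hjne : j' ≠ j₀)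
    (x₀ x : ℝ) (hx : 0 < x) (hxx : x < x₀)
    (hs1 : Summable (fun j : ℕ => a j * x ^ j))
    (hs2 : Summable (fun j : ℕ => a j * x₀ ^ j))
    (h0 : ∑' j : ℕ, a j * x₀ ^ j = 0) :
    0 < ∑' j : ℕ, a j * x ^ j := by
  have hx0 : 0 < x₀ := hx.trans hxx
  set t : ℝ := x / x₀ with ht
  have ht0 : 0 < t := div_pos hx hx0
  have ht1 : t < 1 := (div_lt_one hx0).2 hxx
  have hxt : ∀ j : ℕ, a j * x ^ j = a j * x₀ ^ j * t ^ j := by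
    intro j
    rw [ht, div_pow]
    field_simp
  set g : ℕ → ℝ := fun j => a j * x ^ j - t ^ j₀ * (a j * x₀ ^ j) with hg
  have hg_eq : ∀ j, g j = a j * x₀ ^ j * (t ^ j - t ^ j₀) := by
    intro j; rw [hg]; simp only; rw [hxt j]; ring
  have hsum : Summable g := hs1.sub (hs2.mul_left _)
  have htsum : ∑' j, g j = ∑' j : ℕ, a j * x ^ j := by
    rw [hg, Summable.tsum_sub hs1 (hs2.mul_left _), tsum_mul_left, h0, mul_zero, sub_zero]
  have hnonneg : ∀ j, 0 ≤ g j := by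
    intro j
    rw [hg_eq]
    rcases le_or_gt j j₀ with h | h
    · refine mul_nonneg (mul_nonneg (h1 j h) (pow_nonneg hx0.le j)) ?_
      exact sub_nonneg.2 (pow_le_pow_of_le_one ht0.le ht1.le h)
    · refine mul_nonneg_of_nonpos_nonpos'
        (mul_nonpos_of_nonpos_of_nonneg (h2 j h) (pow_nonneg hx0.le j)) ?_
      exact sub_nonpos.2 (pow_le_pow_of_le_one ht0.le ht1.le h.le)
  have hpos : 0 < g j' := by
    rw [hg_eq]
    rcases hjne.lt_or_gt with h | h
    · refine mul_pos (mul_pos ((h1 j' h.le).lt_of_ne' hj') (pow_pos hx0 j')) ?_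
      exact sub_pos.2 (pow_lt_pow_right_of_lt_one₀ ht0 ht1 h)
    · refine mul_pos_of_neg_of_neg
        (mul_neg_of_neg_of_pos ((h2 j' h).lt_of_ne hj') (pow_pos hx0 j')) ?_
      exact sub_neg.2 (pow_lt_pow_right_of_lt_one₀ ht0 ht1 h)
  calc (0:ℝ) < ∑' j, g j := Summable.tsum_pos hsum hnonneg j' hpos
    _ = _ := htsum

/-- Core estimate, right side: symmetric to `powerSeries_core_left` for `x > x₀`. -/
lemma powerSeries_core_right (a : ℕ → ℝ) (j₀ : ℕ)
    (h1 : ∀ j ≤ j₀, 0 ≤ a j) (h2 : ∀ j, j₀ < j → a j ≤ 0)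
    (j' : ℕ) (hj' : a j' ≠ 0) (hjne : j' ≠ j₀)
    (x₀ x : ℝ) (hx0 : 0 < x₀) (hxx : x₀ < x)
    (hs1 : Summable (fun j : ℕ => a j * x ^ j))
    (hs2 : Summable (fun j : ℕ => a j * x₀ ^ j))
    (h0 : ∑' j : ℕ, a j * x₀ ^ j = 0) :
    ∑' j : ℕ, a j * x ^ j < 0 := by
  set t : ℝ := x / x₀ with ht
  have ht1 : 1 < t := (one_lt_div hx0).2 hxx
  have ht0 : 0 < t := zero_lt_one.trans ht1
  have hxt : ∀ j : ℕ, a j * x ^ j = a j * x₀ ^ j * t ^ j := by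
    intro j
    rw [ht, div_pow]
    field_simp
  set g : ℕ → ℝ := fun j => t ^ j₀ * (a j * x₀ ^ j) - a j * x ^ j with hg
  have hg_eq : ∀ j, g j = a j * x₀ ^ j * (t ^ j₀ - t ^ j) := by
    intro j; rw [hg]; simp only; rw [hxt j]; ring
  have hsum : Summable g := (hs2.mul_left _).sub hs1
  have htsum : ∑' j, g j = - ∑' j : ℕ, a j * x ^ j := by
    rw [hg, Summable.tsum_sub (hs2.mul_left _) hs1, tsum_mul_left, h0, mul_zero, zero_sub]
  have hnonneg : ∀ j, 0 ≤ g j := by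
    intro j
    rw [hg_eq]
    rcases le_or_gt j j₀ with h | h
    · refine mul_nonneg (mul_nonneg (h1 j h) (pow_nonneg hx0.le j)) ?_
      exact sub_nonneg.2 (pow_le_pow_right₀ ht1.le h)
    · refine mul_nonneg_of_nonpos_nonpos'
        (mul_nonpos_of_nonpos_of_nonneg (h2 j h) (pow_nonneg hx0.le j)) ?_
      exact sub_nonpos.2 (pow_le_pow_right₀ ht1.le h.le)
  have hpos : 0 < g j' := by
    rw [hg_eq]
    rcases hjne.lt_or_gt with h | h
    · refine mul_pos (mul_pos ((h1 j' h.le).lt_of_ne' hj') (pow_pos hx0 j')) ?_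
      exact sub_pos.2 (pow_lt_pow_right₀ ht1 h)
    · refine mul_pos_of_neg_of_neg
        (mul_neg_of_neg_of_pos ((h2 j' h).lt_of_ne hj') (pow_pos hx0 j')) ?_
      exact sub_neg.2 (pow_lt_pow_right₀ ht1 h)
  have := Summable.tsum_pos hsum hnonneg j' hpos
  rw [htsum] at this
  linarith

/-- A real power series whose coefficient sequence is nonnegative, or nonpositive, or
changes sign (from `≥ 0` to `≤ 0`) exactly once, has at most one zero in `(0,γ)`; and at
such a zero it changes sign from positive to negative. -/
theorem powerSeries_sign_change_at_most_one_zero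
    (γ : ℝ) (hγ : 0 < γ) (a : ℕ → ℝ)
    (hconv : ∀ x : ℝ, |x| < γ → Summable (fun j : ℕ => a j * x ^ j))
    (hsign : (∀ j, 0 ≤ a j) ∨ (∀ j, a j ≤ 0) ∨
      (∃ j₀ : ℕ, (∀ j ≤ j₀, 0 ≤ a j) ∧ ∀ j, j₀ < j → a j ≤ 0))
    (f : ℝ → ℝ) (hf : ∀ x : ℝ, f x = ∑' j : ℕ, a j * x ^ j)
    (hne : ¬ ∀ x ∈ Ioo (-γ) γ, f x = 0) :
    (∀ x₀ ∈ Ioo (0 : ℝ) γ, ∀ x₁ ∈ Ioo (0 : ℝ) γ, f x₀ = 0 → f x₁ = 0 → x₀ = x₁) ∧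
    (∀ x₀ ∈ Ioo (0 : ℝ) γ, f x₀ = 0 →
      (∀ x : ℝ, 0 < x → x < x₀ → 0 < f x) ∧ (∀ x : ℝ, x₀ < x → x < γ → f x < 0)) := by
  -- Some coefficient is nonzero.
  have hex : ∃ j, a j ≠ 0 := by
    by_contra h
    push_neg at h
    exact hne fun x _ => by rw [hf]; simp [h]
  -- abs bound helper
  have habs : ∀ x : ℝ, 0 < x → x < γ → |x| < γ := fun x hx hxγ => by
    rwa [abs_of_pos hx]
  rcases hsign with hpos | hneg | ⟨j₀, h1, h2⟩
  · -- all nonnegative: there are no zeros in (0,γ)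
    have key : ∀ x₀ ∈ Ioo (0 : ℝ) γ, f x₀ ≠ 0 := by
      rintro x₀ ⟨hx₀, hx₀γ⟩ h0
      obtain ⟨j', hj'⟩ := hex
      have : 0 < ∑' j : ℕ, a j * x₀ ^ j :=
        Summable.tsum_pos (hconv x₀ (habs _ hx₀ hx₀γ))
          (fun j => mul_nonneg (hpos j) (pow_nonneg hx₀.le j)) j'
          (mul_pos ((hpos j').lt_of_ne' hj') (pow_pos hx₀ j'))
      rw [← hf, h0] at this
      exact lt_irrefl _ this
    exact ⟨fun x₀ h₀ x₁ h₁ hz₀ _ => absurd hz₀ (key x₀ h₀),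
      fun x₀ h₀ hz₀ => absurd hz₀ (key x₀ h₀)⟩
  · -- all nonpositive: there are no zeros in (0,γ)
    have key : ∀ x₀ ∈ Ioo (0 : ℝ) γ, f x₀ ≠ 0 := by
      rintro x₀ ⟨hx₀, hx₀γ⟩ h0
      obtain ⟨j', hj'⟩ := hex
      have hs : Summable (fun j : ℕ => a j * x₀ ^ j) := hconv x₀ (habs _ hx₀ hx₀γ)
      have hs' : Summable (fun j : ℕ => -(a j * x₀ ^ j)) := hs.neg
      have : 0 < ∑' j : ℕ, -(a j * x₀ ^ j) :=
        Summable.tsum_pos hs'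
          (fun j => neg_nonneg.2 (mul_nonpos_of_nonpos_of_nonneg (hneg j)
            (pow_nonneg hx₀.le j))) j'
          (neg_pos.2 (mul_neg_of_neg_of_pos ((hneg j').lt_of_ne hj') (pow_pos hx₀ j')))
      rw [tsum_neg] at this
      rw [← hf] at this
      rw [h0] at this
      simp at this
    exact ⟨fun x₀ h₀ x₁ h₁ hz₀ _ => absurd hz₀ (key x₀ h₀),
      fun x₀ h₀ hz₀ => absurd hz₀ (key x₀ h₀)⟩
  · -- sign change case
    -- if f vanishes at some x₀ ∈ (0,γ), there is a nonzero coefficient away from j₀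
    have hout : ∀ x₀ ∈ Ioo (0 : ℝ) γ, f x₀ = 0 → ∃ j', a j' ≠ 0 ∧ j' ≠ j₀ := by
      rintro x₀ ⟨hx₀, hx₀γ⟩ h0
      by_contra h
      push_neg at h
      have hz : ∀ j ≠ j₀, a j = 0 := by
        intro j hj
        by_contra hja
        exact hj (h j hja)
      have hsingle : ∑' j : ℕ, a j * x₀ ^ j = a j₀ * x₀ ^ j₀ :=
        tsum_eq_single j₀ (fun j hj => by rw [hz j hj, zero_mul])
      rw [hf, hsingle] at h0
      have hb : a j₀ = 0 := by
        have := pow_pos hx₀ j₀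
        rcases mul_eq_zero.1 h0 with h' | h'
        · exact h'
        · exact absurd h' this.ne'
      obtain ⟨j', hj'⟩ := hex
      rcases eq_or_ne j' j₀ with rfl | hne'
      · exact hj' hb
      · exact hj' (hz j' hne')
    -- second bullet first
    have second : ∀ x₀ ∈ Ioo (0 : ℝ) γ, f x₀ = 0 →
        (∀ x : ℝ, 0 < x → x < x₀ → 0 < f x) ∧ (∀ x : ℝ, x₀ < x → x < γ → f x < 0) := by
      rintro x₀ hx₀m h0
      obtain ⟨hx₀, hx₀γ⟩ := hx₀m
      obtain ⟨j', hj', hjne⟩ := hout x₀ ⟨hx₀, hx₀γ⟩ h0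
      have h0' : ∑' j : ℕ, a j * x₀ ^ j = 0 := by rw [← hf]; exact h0
      have hs2 : Summable (fun j : ℕ => a j * x₀ ^ j) := hconv x₀ (habs _ hx₀ hx₀γ)
      constructor
      · intro x hx hxx
        rw [hf]
        exact powerSeries_core_left a j₀ h1 h2 j' hj' hjne x₀ x hx hxx
          (hconv x (habs _ hx (hxx.trans hx₀γ))) hs2 h0'
      · intro x hxx hxγ
        rw [hf]
        exact powerSeries_core_right a j₀ h1 h2 j' hj' hjne x₀ x hx₀ hxx
          (hconv x (habs _ (hx₀.trans hxx) hxγ)) hs2 h0'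
    refine ⟨?_, second⟩
    rintro x₀ hx₀m x₁ hx₁m hz₀ hz₁
    by_contra hne'
    rcases lt_or_gt_of_ne hne' with h | h
    · have := (second x₀ hx₀m hz₀).2 x₁ h hx₁m.2
      rw [hz₁] at this; exact lt_irrefl _ this
    · have := (second x₁ hx₁m hz₁).2 x₀ h hx₀m.2
      rw [hz₀] at this; exact lt_irrefl _ this
end
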